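/- Let Θ₀ : ℝ → [0,1] be a fixed smooth even function with Θ₀(x) = 1 for |x| ≤ 1 and Θ₀(x) = 0 for |x| ≥ 2. For δ ∈ (0,1), λ > 0 and s ≥ 1, set θ(y) = Θ₀(λy/δ). Then for every R ∈ 𝒴 and every integer j ≥ 1 there exists a constant C (depending only on R, j and Θ₀, not on δ, λ, s) such that whenever 0 < λ ≤ min(δ, 3δ/(4√s)): ‖θ R‖_{L²(ℝ)} ≤ C, and ‖(d^j θ/dy^j) · R‖_{L²(ℝ)} ≤ C e^{−√s}. -/

import Mathlib

open scoped ContDiff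
open MeasureTheory Real Set

/-- The class `𝒴` of smooth even real functions decaying, together with all their derivatives,
like a polynomial times `e^{-|x|}`. -/
def memY (g : ℝ → ℝ) : Prop :=
  ContDiff ℝ ∞ g ∧ (∀ x, g (-x) = g x) ∧
    ∃ q : ℕ, ∀ p : ℕ, ∃ C : ℝ, 0 < C ∧ ∀ x : ℝ,
      |iteratedDeriv p g x| ≤ C * (1 + x ^ 2) ^ ((q : ℝ) / 2) * Real.exp (-|x|)

/-- The rescaled cut-off `θ(y) = Θ₀(λy/δ)`. -/
noncomputable def cutTheta (Θ₀ : ℝ → ℝ) (δ lam : ℝ) (y : ℝ) : ℝ := Θ₀ (lam * y / δ)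

lemma aux_Ioi (q : ℕ) {c : ℝ} (hc : 0 < c) :
    MeasureTheory.IntegrableOn (fun x : ℝ => (1 + x ^ 2) ^ q * Real.exp (-(c * x))) (Set.Ioi 0) := by
  have h : ∀ k : ℕ, MeasureTheory.IntegrableOn
      (fun x : ℝ => x ^ (2 * k) * Real.exp (-(c * x))) (Set.Ioi 0) := by
    intro k
    have h0 := integrableOn_rpow_mul_exp_neg_mul_rpow (p := 1) (s := (2 * k : ℕ))
      (by exact lt_of_lt_of_le neg_one_lt_zero (Nat.cast_nonneg _)) one_pos hc
    refine h0.congr_fun (fun x hx => ?_) measurableSet_Ioi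
    beta_reduce
    rw [Real.rpow_natCast, Real.rpow_one, neg_mul]
  have hexp : (fun x : ℝ => (1 + x ^ 2) ^ q * Real.exp (-(c * x)))
      = fun x : ℝ => ∑ k ∈ Finset.range (q + 1),
          (q.choose k : ℝ) * (x ^ (2 * k) * Real.exp (-(c * x))) := by
    funext x
    rw [show (1 : ℝ) + x ^ 2 = x ^ 2 + 1 by ring, add_pow, Finset.sum_mul]
    refine Finset.sum_congr rfl fun k hk => ?_
    rw [← pow_mul]
    ring
  rw [hexp]
  exact MeasureTheory.integrable_finset_sum _ fun k _ => (h k).const_mul _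

lemma integrable_aux (q : ℕ) {c : ℝ} (hc : 0 < c) :
    MeasureTheory.Integrable (fun y : ℝ => (1 + y ^ 2) ^ q * Real.exp (-(c * |y|))) := by
  set h : ℝ → ℝ := fun x => (1 + x ^ 2) ^ q * Real.exp (-(c * x)) with hh
  have hF : Integrable ((Set.Ioi (0:ℝ)).indicator h) := by
    rw [MeasureTheory.integrable_indicator_iff measurableSet_Ioi]
    exact aux_Ioi q hc
  have hFneg : Integrable (fun y : ℝ => (Set.Ioi (0:ℝ)).indicator h (-y)) := by
    have := hF.comp_mul_left' (R := (-1 : ℝ)) (by norm_num)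
    simpa [neg_one_mul] using this
  have hne : ∀ᵐ y : ℝ, y ≠ 0 := by
    rw [MeasureTheory.ae_iff]
    convert Real.volume_singleton (a := 0) using 2
    ext y; simp [not_not]
  refine MeasureTheory.Integrable.mono' (hF.add hFneg) ?_ ?_
  · exact (by continuity : Continuous fun y : ℝ => (1 + y ^ 2) ^ q * Real.exp (-(c * |y|))).aestronglyMeasurable
  · filter_upwards [hne] with y hy
    rw [Real.norm_eq_abs, abs_of_nonneg (by positivity)]
    rcases lt_or_gt_of_ne hy with hlt | hgt
    · have h1 : (Set.Ioi (0:ℝ)).indicator h y = 0 := by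
        apply Set.indicator_of_notMem; simpa using hlt.le
      have h2 : (Set.Ioi (0:ℝ)).indicator h (-y) = h (-y) := by
        apply Set.indicator_of_mem; simpa using hlt
      have : |y| = -y := abs_of_neg hlt
      rw [Pi.add_apply, h1, h2, this, zero_add, hh]
      simp only [neg_sq]
      exact le_refl _
    · have h1 : (Set.Ioi (0:ℝ)).indicator h y = h y := by
        apply Set.indicator_of_mem; simpa using hgt
      have : |y| = y := abs_of_pos hgt
      simp only [Pi.add_apply, h1, this, hh]
      have h2 : 0 ≤ (Set.Ioi (0:ℝ)).indicator h (-y) := by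
        apply Set.indicator_nonneg; intro x _; positivity
      nlinarith [h2]

lemma aux_zero_fun (n : ℕ) : iteratedDeriv n (fun _ : ℝ => (0:ℝ)) = fun _ => 0 := by
  induction n with
  | zero => simp [iteratedDeriv_zero]
  | succ n ih =>
    rw [iteratedDeriv_succ', show (deriv fun _ : ℝ => (0:ℝ)) = fun _ => (0:ℝ) from funext fun x => deriv_const x 0]
    exact ih

lemma aux_one_fun (n : ℕ) (hn : 1 ≤ n) : iteratedDeriv n (fun _ : ℝ => (1:ℝ)) = fun _ => 0 := by
  obtain ⟨m, rfl⟩ : ∃ m, n = m + 1 := ⟨n - 1, by omega⟩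
  rw [iteratedDeriv_succ', show (deriv fun _ : ℝ => (1:ℝ)) = fun _ => (0:ℝ) from funext fun x => deriv_const x 1]
  exact aux_zero_fun m

/-- Cut-off estimates against `𝒴`: for `R ∈ 𝒴` and `j ≥ 1` there is `C` (independent of
`δ, λ, s`) such that, whenever `0 < λ ≤ min(δ, 3δ/(4√s))`,
`‖θR‖_{L²} ≤ C` and `‖θ^{(j)}R‖_{L²} ≤ C e^{−√s}`, where `θ(y) = Θ₀(λy/δ)`. -/
theorem cutoff_estimates_Y (Θ₀ : ℝ → ℝ) (hsm : ContDiff ℝ ∞ Θ₀)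
    (heven : ∀ x, Θ₀ (-x) = Θ₀ x) (hrange : ∀ x, Θ₀ x ∈ Set.Icc (0 : ℝ) 1)
    (hone : ∀ x : ℝ, |x| ≤ 1 → Θ₀ x = 1) (hzero : ∀ x : ℝ, 2 ≤ |x| → Θ₀ x = 0)
    (R : ℝ → ℝ) (hR : memY R) (j : ℕ) (hj : 1 ≤ j) :
    ∃ C : ℝ, 0 < C ∧ ∀ δ lam s : ℝ, δ ∈ Set.Ioo (0 : ℝ) 1 → 0 < lam → 1 ≤ s →
      lam ≤ min δ (3 * δ / (4 * Real.sqrt s)) →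
      Real.sqrt (∫ y : ℝ, (cutTheta Θ₀ δ lam y * R y) ^ 2) ≤ C ∧
      Real.sqrt (∫ y : ℝ, (iteratedDeriv j (cutTheta Θ₀ δ lam) y * R y) ^ 2)
        ≤ C * Real.exp (-Real.sqrt s) := by
  obtain ⟨hRsm, -, q, hq⟩ := hR
  obtain ⟨C₀, hC₀pos, hC₀⟩ := hq 0
  simp only [iteratedDeriv_zero] at hC₀
  have hΘcs : HasCompactSupport Θ₀ := by
    refine HasCompactSupport.intro (isCompact_Icc (a := (-2:ℝ)) (b := 2)) (fun x hx => hzero x ?_)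
    simp only [Set.mem_Icc, not_and_or, not_le] at hx
    rcases hx with h | h
    · rw [abs_of_neg (by linarith)]; linarith
    · rw [abs_of_pos (by linarith)]; linarith
  have hcsj : ∀ n, HasCompactSupport (iteratedDeriv n Θ₀) := by
    intro n; induction n with
    | zero => simpa [iteratedDeriv_zero] using hΘcs
    | succ n ih => rw [iteratedDeriv_succ]; exact ih.deriv
  have hcontj : Continuous (iteratedDeriv j Θ₀) :=
    hsm.continuous_iteratedDeriv j (by exact_mod_cast le_top)
  obtain ⟨K, hK⟩ := (hcsj j).exists_bound_of_continuous hcontj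
  have hK0 : 0 ≤ K := le_trans (norm_nonneg _) (hK 0)
  have hvan : ∀ x : ℝ, |x| < 1 → iteratedDeriv j Θ₀ x = 0 := by
    intro x hx
    have hop : IsOpen {y : ℝ | |y| < 1} := isOpen_lt continuous_abs continuous_const
    have hev : Θ₀ =ᶠ[nhds x] fun _ => (1:ℝ) := by
      filter_upwards [hop.mem_nhds hx] with y hy using hone y hy.le
    rw [hev.iteratedDeriv_eq j, aux_one_fun j hj]
  -- square of the rpow weight
  have hsq : ∀ x : ℝ, ((1 + x ^ 2) ^ ((q:ℝ)/2)) ^ 2 = (1 + x ^ 2) ^ q := by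
    intro x
    rw [← Real.rpow_natCast ((1 + x ^ 2) ^ ((q:ℝ)/2)) 2, ← Real.rpow_mul (by positivity)]
    norm_num
  have hexp2 : ∀ x : ℝ, Real.exp (-|x|) ^ 2 = Real.exp (-(2 * |x|)) := by
    intro x; rw [sq, ← Real.exp_add]; ring_nf
  have hR2 : ∀ x : ℝ, R x ^ 2 ≤ C₀ ^ 2 * ((1 + x ^ 2) ^ q * Real.exp (-(2 * |x|))) := by
    intro x
    have h1 : |R x| ^ 2 ≤ (C₀ * (1 + x ^ 2) ^ ((q:ℝ)/2) * Real.exp (-|x|)) ^ 2 :=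
      pow_le_pow_left₀ (abs_nonneg _) (hC₀ x) 2
    rw [sq_abs] at h1
    calc R x ^ 2 ≤ (C₀ * (1 + x ^ 2) ^ ((q:ℝ)/2) * Real.exp (-|x|)) ^ 2 := h1
      _ = C₀ ^ 2 * ((1 + x ^ 2) ^ q * Real.exp (-(2 * |x|))) := by
          rw [mul_pow, mul_pow, hsq x, hexp2 x]; ring
  set G₁ : ℝ → ℝ := fun y => C₀ ^ 2 * ((1 + y ^ 2) ^ q * Real.exp (-(2 * |y|))) with hG₁def
  set G₂ : ℝ → ℝ := fun y => K ^ 2 * C₀ ^ 2 * ((1 + y ^ 2) ^ q * Real.exp (-(2⁻¹ * |y|))) with hG₂def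
  have hG₁ : Integrable G₁ := (integrable_aux q two_pos).const_mul _
  have hG₂ : Integrable G₂ := (integrable_aux q (by norm_num : (0:ℝ) < 2⁻¹)).const_mul _
  have hI1 : 0 ≤ ∫ y, G₁ y := integral_nonneg fun y => by positivity
  have hI2 : 0 ≤ ∫ y, G₂ y := integral_nonneg fun y => by positivity
  refine ⟨1 + Real.sqrt (∫ y, G₁ y) + Real.sqrt (∫ y, G₂ y),
    by positivity, ?_⟩
  intro δ lam s hδ hlam hs hmin
  obtain ⟨hδ0, hδ1⟩ := hδ
  have hs0 : (0:ℝ) < Real.sqrt s := Real.sqrt_pos.mpr (by linarith)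
  have hlamδ : lam ≤ δ := le_trans hmin (min_le_left _ _)
  have hlam2 : lam ≤ 3 * δ / (4 * Real.sqrt s) := le_trans hmin (min_le_right _ _)
  have hsq1 : Real.sqrt (∫ y, G₁ y) ≥ 0 := Real.sqrt_nonneg _
  have hsq2 : Real.sqrt (∫ y, G₂ y) ≥ 0 := Real.sqrt_nonneg _
  constructor
  · -- first estimate
    have hmono : (∫ y, (cutTheta Θ₀ δ lam y * R y) ^ 2) ≤ ∫ y, G₁ y := by
      refine integral_mono_of_nonneg (Filter.Eventually.of_forall fun y => sq_nonneg _) hG₁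
        (Filter.Eventually.of_forall fun y => ?_)
      have hb : |cutTheta Θ₀ δ lam y| ≤ 1 := by
        have h := hrange (lam * y / δ)
        rw [abs_le]
        exact ⟨by simpa [cutTheta] using le_trans (by norm_num) h.1, by simpa [cutTheta] using h.2⟩
      have hb2 : cutTheta Θ₀ δ lam y ^ 2 ≤ 1 := by
        calc cutTheta Θ₀ δ lam y ^ 2 = |cutTheta Θ₀ δ lam y| ^ 2 := (sq_abs _).symm
          _ ≤ 1 ^ 2 := pow_le_pow_left₀ (abs_nonneg _) hb 2
          _ = 1 := one_pow 2
      calc (cutTheta Θ₀ δ lam y * R y) ^ 2 = cutTheta Θ₀ δ lam y ^ 2 * R y ^ 2 := mul_pow _ _ 2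
        _ ≤ 1 * R y ^ 2 := mul_le_mul_of_nonneg_right hb2 (sq_nonneg _)
        _ = R y ^ 2 := one_mul _
        _ ≤ G₁ y := hR2 y
    calc Real.sqrt (∫ y, (cutTheta Θ₀ δ lam y * R y) ^ 2) ≤ Real.sqrt (∫ y, G₁ y) :=
          Real.sqrt_le_sqrt hmono
      _ ≤ 1 + Real.sqrt (∫ y, G₁ y) + Real.sqrt (∫ y, G₂ y) := by linarith
  · -- second estimate
    have hrpos : 0 < lam / δ := div_pos hlam hδ0
    have hfun : cutTheta Θ₀ δ lam = fun y => Θ₀ (lam / δ * y) := by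
      funext y; unfold cutTheta; congr 1; ring
    have hderiv : iteratedDeriv j (cutTheta Θ₀ δ lam)
        = fun y => (lam / δ) ^ j * iteratedDeriv j Θ₀ (lam / δ * y) := by
      rw [hfun]; exact iteratedDeriv_comp_const_mul (hsm.of_le (by exact_mod_cast le_top)) _
    have hr1 : lam / δ ≤ 1 := (div_le_one hδ0).mpr hlamδ
    have hylb' : 4 / 3 * Real.sqrt s ≤ δ / lam := by
      have h4 : lam * (4 * Real.sqrt s) ≤ 3 * δ := by
        rw [← le_div_iff₀ (by positivity)]; exact hlam2
      rw [le_div_iff₀ hlam]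
      nlinarith
    have hptw : ∀ y, (iteratedDeriv j (cutTheta Θ₀ δ lam) y * R y) ^ 2
        ≤ Real.exp (-Real.sqrt s) ^ 2 * G₂ y := by
      intro y
      rw [hderiv]
      by_cases hy : |y| < δ / lam
      · have hlt : |lam / δ * y| < 1 := by
          rw [abs_mul, abs_of_pos hrpos]
          calc lam / δ * |y| < lam / δ * (δ / lam) := mul_lt_mul_of_pos_left hy hrpos
            _ = 1 := by field_simp
        show ((lam / δ) ^ j * iteratedDeriv j Θ₀ (lam / δ * y) * R y) ^ 2
            ≤ Real.exp (-Real.sqrt s) ^ 2 * G₂ y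
        rw [hvan _ hlt]
        simp only [mul_zero, zero_mul, ne_eq, OfNat.ofNat_ne_zero, not_false_eq_true, zero_pow]
        positivity
      · push_neg at hy
        have hylb : 4 / 3 * Real.sqrt s ≤ |y| := le_trans hylb' hy
        have hD : |iteratedDeriv j Θ₀ (lam / δ * y)| ≤ K := by
          simpa [Real.norm_eq_abs] using hK (lam / δ * y)
        have hDsq : iteratedDeriv j Θ₀ (lam / δ * y) ^ 2 ≤ K ^ 2 := by
          calc iteratedDeriv j Θ₀ (lam / δ * y) ^ 2 = |iteratedDeriv j Θ₀ (lam / δ * y)| ^ 2 :=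
                (sq_abs _).symm
            _ ≤ K ^ 2 := pow_le_pow_left₀ (abs_nonneg _) hD 2
        have hrj : ((lam / δ) ^ j) ^ 2 ≤ 1 := by
          calc ((lam / δ) ^ j) ^ 2 ≤ 1 ^ 2 :=
                pow_le_pow_left₀ (by positivity) (pow_le_one₀ hrpos.le hr1) 2
            _ = 1 := one_pow 2
        have hexp : Real.exp (-(2 * |y|)) ≤ Real.exp (-Real.sqrt s) ^ 2 * Real.exp (-(2⁻¹ * |y|)) := by
          rw [sq, ← Real.exp_add, ← Real.exp_add]
          apply Real.exp_le_exp.mpr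
          nlinarith
        calc ((lam / δ) ^ j * iteratedDeriv j Θ₀ (lam / δ * y) * R y) ^ 2
            = ((lam / δ) ^ j) ^ 2 * (iteratedDeriv j Θ₀ (lam / δ * y) ^ 2 * R y ^ 2) := by ring
          _ ≤ 1 * (K ^ 2 * (C₀ ^ 2 * ((1 + y ^ 2) ^ q * Real.exp (-(2 * |y|))))) := by
              apply mul_le_mul hrj _ (by positivity) one_pos.le
              exact mul_le_mul hDsq (hR2 y) (sq_nonneg _) (by positivity)
          _ = K ^ 2 * C₀ ^ 2 * (1 + y ^ 2) ^ q * Real.exp (-(2 * |y|)) := by ring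
          _ ≤ K ^ 2 * C₀ ^ 2 * (1 + y ^ 2) ^ q *
              (Real.exp (-Real.sqrt s) ^ 2 * Real.exp (-(2⁻¹ * |y|))) :=
              mul_le_mul_of_nonneg_left hexp (by positivity)
          _ = Real.exp (-Real.sqrt s) ^ 2 * G₂ y := by rw [hG₂def]; ring
    have hmono : (∫ y, (iteratedDeriv j (cutTheta Θ₀ δ lam) y * R y) ^ 2)
        ≤ ∫ y, Real.exp (-Real.sqrt s) ^ 2 * G₂ y :=
      integral_mono_of_nonneg (Filter.Eventually.of_forall fun y => sq_nonneg _)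
        (hG₂.const_mul _) (Filter.Eventually.of_forall hptw)
    rw [integral_const_mul] at hmono
    calc Real.sqrt (∫ y, (iteratedDeriv j (cutTheta Θ₀ δ lam) y * R y) ^ 2)
        ≤ Real.sqrt (Real.exp (-Real.sqrt s) ^ 2 * ∫ y, G₂ y) := Real.sqrt_le_sqrt hmono
      _ = Real.exp (-Real.sqrt s) * Real.sqrt (∫ y, G₂ y) := by
          rw [Real.sqrt_mul (sq_nonneg _), Real.sqrt_sq (Real.exp_pos _).le]
      _ ≤ (1 + Real.sqrt (∫ y, G₁ y) + Real.sqrt (∫ y, G₂ y)) * Real.exp (-Real.sqrt s) := by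
          rw [mul_comm]
          apply mul_le_mul_of_nonneg_right _ (Real.exp_pos _).le
          linarith
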